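/- Let b, σ : ℝ → ℝ be convex and Lipschitz continuous with respective Lipschitz constants L_b ≥ 0 and L_σ > 0, with σ ≥ 0. Let h ∈ (0, min(1, 1/(2L_b))) (with the convention min(1, 1/(2L_b)) = 1 if L_b = 0), let c ∈ ℝ, let Z be a standard normal random variable, and set Z^h := Z·1_{|Z| ≤ c_{h,σ}} with truncation threshold c_{h,σ} := 1/(2√h·L_σ). Then for every non-decreasing convex function φ : ℝ → ℝ, the function x ∈ ℝ ↦ E[φ(x + h·b(x) + √h·σ(x)·Z^h + c)] is convex and non-decreasing. -/

import Mathlib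

open MeasureTheory ProbabilityTheory

lemma convex_pair_ineq' {φ : ℝ → ℝ} (hφmono : Monotone φ)
    (hφconv : ConvexOn ℝ Set.univ φ) {u₁ u₂ v₁ v₂ : ℝ}
    (h21 : u₂ ≤ u₁) (h1 : u₁ ≤ v₁) (hsum : u₁ + u₂ ≤ v₁ + v₂) :
    φ u₁ + φ u₂ ≤ φ v₁ + φ v₂ := by
  rcases le_or_gt u₂ v₂ with h2 | h2
  · exact add_le_add (hφmono h1) (hφmono h2)
  · have hd : 0 < v₁ - v₂ := by linarith
    have key : ∀ w : ℝ, v₂ ≤ w → w ≤ v₁ →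
        φ w ≤ ((w - v₂)/(v₁ - v₂)) * φ v₁ + (1 - (w - v₂)/(v₁ - v₂)) * φ v₂ := by
      intro w hw1 hw2
      have hθ0 : (0:ℝ) ≤ (w - v₂)/(v₁ - v₂) := div_nonneg (by linarith) (by linarith)
      have hθ1 : (w - v₂)/(v₁ - v₂) ≤ 1 := by
        rw [div_le_one hd]; linarith
      have hcomb := hφconv.2 (Set.mem_univ v₁) (Set.mem_univ v₂) hθ0
        (by linarith : (0:ℝ) ≤ 1 - (w - v₂)/(v₁ - v₂)) (by ring)
      have hw : ((w - v₂)/(v₁ - v₂)) • v₁ + (1 - (w - v₂)/(v₁ - v₂)) • v₂ = w := by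
        simp only [smul_eq_mul]
        field_simp
        ring
      rw [hw] at hcomb
      simpa using hcomb
    have k1 := key u₁ (by linarith) h1
    have k2 := key u₂ (by linarith) (by linarith)
    have hθsum : (u₁ - v₂)/(v₁ - v₂) + (u₂ - v₂)/(v₁ - v₂) ≤ 1 := by
      rw [← add_div, div_le_one hd]; linarith
    have hmono : φ v₂ ≤ φ v₁ := hφmono (by linarith)
    nlinarith [mul_nonneg (by linarith : (0:ℝ) ≤ 1 - ((u₁ - v₂)/(v₁ - v₂) + (u₂ - v₂)/(v₁ - v₂)))
      (by linarith : (0:ℝ) ≤ φ v₁ - φ v₂)]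

lemma pair_convexOn' {φ A S : ℝ → ℝ} (hφmono : Monotone φ)
    (hφconv : ConvexOn ℝ Set.univ φ)
    (hA : ConvexOn ℝ Set.univ A) (hS : ConvexOn ℝ Set.univ S)
    (hS0 : ∀ x, 0 ≤ S x) :
    ConvexOn ℝ Set.univ (fun x => φ (A x + S x) + φ (A x - S x)) := by
  refine ⟨convex_univ, fun x _ y _ a b ha hb hab => ?_⟩
  simp only [smul_eq_mul]
  have hAm := hA.2 (Set.mem_univ x) (Set.mem_univ y) ha hb hab
  have hSm := hS.2 (Set.mem_univ x) (Set.mem_univ y) ha hb hab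
  simp only [smul_eq_mul] at hAm hSm
  set m := a * x + b * y with hm
  have step1 : φ (A m + S m) + φ (A m - S m) ≤
      φ ((a*A x + b*A y) + (a*S x + b*S y)) + φ ((a*A x + b*A y) - (a*S x + b*S y)) :=
    convex_pair_ineq' hφmono hφconv (by linarith [hS0 m]) (by linarith) (by linarith)
  have e1 : (a*A x + b*A y) + (a*S x + b*S y) = a*(A x + S x) + b*(A y + S y) := by ring
  have e2 : (a*A x + b*A y) - (a*S x + b*S y) = a*(A x - S x) + b*(A y - S y) := by ring
  have s1 := hφconv.2 (Set.mem_univ (A x + S x)) (Set.mem_univ (A y + S y)) ha hb hab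
  have s2 := hφconv.2 (Set.mem_univ (A x - S x)) (Set.mem_univ (A y - S y)) ha hb hab
  simp only [smul_eq_mul] at s1 s2
  rw [e1, e2] at step1
  linarith

/-- Monotonicity and convexity in `x` of the one-step truncated Euler kernel
`x ↦ E[φ(x + h b(x) + √h σ(x) Z^h + c)]`, where `b, σ` are convex and Lipschitz (with constants
`L_b ≥ 0`, `L_σ > 0`), `σ ≥ 0`, `h ∈ (0, min(1, 1/(2 L_b)))` (the bound being `1` when
`L_b = 0`), `Z` is standard normal and `Z^h = Z 1_{|Z| ≤ c_{h,σ}}` with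
`c_{h,σ} = 1/(2 √h L_σ)`, and `φ` is non-decreasing and convex. -/
theorem truncated_kernel_convex_monotone
    {Ω : Type*} [MeasurableSpace Ω] (P : Measure Ω) [IsProbabilityMeasure P]
    (b σ : ℝ → ℝ)
    (hbconv : ConvexOn ℝ Set.univ b) (hσconv : ConvexOn ℝ Set.univ σ)
    (hσnonneg : ∀ x, 0 ≤ σ x)
    (Lb Lσ : ℝ) (hLb : 0 ≤ Lb) (hLσ : 0 < Lσ)
    (hbLip : ∀ x y, |b x - b y| ≤ Lb * |x - y|)
    (hσLip : ∀ x y, |σ x - σ y| ≤ Lσ * |x - y|)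
    (h : ℝ) (hh0 : 0 < h) (hh1 : h < 1) (hhb : 2 * Lb * h < 1)
    (c : ℝ)
    (Z : Ω → ℝ) (hZmeas : Measurable Z) (hZlaw : Measure.map Z P = gaussianReal 0 1)
    (φ : ℝ → ℝ) (hφmono : Monotone φ) (hφconv : ConvexOn ℝ Set.univ φ) :
    ConvexOn ℝ Set.univ (fun x =>
      ∫ ω, φ (x + h * b x + Real.sqrt h * σ x *
        (if |Z ω| ≤ 1 / (2 * Real.sqrt h * Lσ) then Z ω else 0) + c) ∂P) ∧
    Monotone (fun x =>
      ∫ ω, φ (x + h * b x + Real.sqrt h * σ x *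
        (if |Z ω| ≤ 1 / (2 * Real.sqrt h * Lσ) then Z ω else 0) + c) ∂P) := by
  set s := Real.sqrt h with hsdef
  have hs : 0 < s := by rw [hsdef]; exact Real.sqrt_pos.2 hh0
  set cthr := 1 / (2 * s * Lσ) with hcthr
  have hcthr0 : 0 < cthr := by
    rw [hcthr]
    exact one_div_pos.2 (mul_pos (mul_pos two_pos hs) hLσ)
  set T : Ω → ℝ := fun ω => if |Z ω| ≤ cthr then Z ω else 0 with hT
  have hTmeas : Measurable T :=
    Measurable.ite (measurableSet_le hZmeas.abs measurable_const) hZmeas measurable_const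
  have hTbdd : ∀ ω, |T ω| ≤ cthr := by
    intro ω
    simp only [hT]
    by_cases hω : |Z ω| ≤ cthr
    · rw [if_pos hω]; exact hω
    · rw [if_neg hω, abs_zero]; exact hcthr0.le
  have hφmeas : Measurable φ := hφmono.measurable
  -- generic integrability
  have key_int : ∀ (x : ℝ) (T' : Ω → ℝ), Measurable T' → (∀ ω, |T' ω| ≤ cthr) →
      Integrable (fun ω => φ (x + h * b x + s * σ x * T' ω + c)) P := by
    intro x T' hT'm hT'b
    have hargm : Measurable fun ω => x + h * b x + s * σ x * T' ω + c :=
      ((measurable_const.add ((measurable_const.mul hT'm))).add measurable_const)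
    refine Integrable.mono' (g := fun _ =>
        max |φ (x + h*b x + s*σ x*cthr + c)| |φ (x + h*b x - s*σ x*cthr + c)|)
      (integrable_const _) ((hφmeas.comp hargm).aestronglyMeasurable)
      (ae_of_all _ fun ω => ?_)
    have hq : 0 ≤ s * σ x := mul_nonneg hs.le (hσnonneg x)
    obtain ⟨hl, hu⟩ := abs_le.1 (hT'b ω)
    have h1 : s * σ x * T' ω ≤ s * σ x * cthr := mul_le_mul_of_nonneg_left hu hq
    have h2 : s * σ x * (-cthr) ≤ s * σ x * T' ω := mul_le_mul_of_nonneg_left hl hq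
    have hhi : φ (x + h*b x + s*σ x*T' ω + c) ≤ φ (x + h*b x + s*σ x*cthr + c) :=
      hφmono (by linarith)
    have hlo : φ (x + h*b x - s*σ x*cthr + c) ≤ φ (x + h*b x + s*σ x*T' ω + c) :=
      hφmono (by linarith)
    rw [Real.norm_eq_abs, abs_le]
    constructor
    · calc -(max |φ (x + h*b x + s*σ x*cthr + c)| |φ (x + h*b x - s*σ x*cthr + c)|)
          ≤ -|φ (x + h*b x - s*σ x*cthr + c)| := neg_le_neg (le_max_right _ _)
        _ ≤ φ (x + h*b x - s*σ x*cthr + c) := neg_abs_le _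
        _ ≤ _ := hlo
    · calc φ (x + h*b x + s*σ x*T' ω + c) ≤ φ (x + h*b x + s*σ x*cthr + c) := hhi
        _ ≤ |φ (x + h*b x + s*σ x*cthr + c)| := le_abs_self _
        _ ≤ _ := le_max_left _ _
  have intp : ∀ x : ℝ, Integrable (fun ω => φ (x + h * b x + s * σ x * T ω + c)) P :=
    fun x => key_int x T hTmeas hTbdd
  have intm : ∀ x : ℝ, Integrable (fun ω => φ (x + h * b x + s * σ x * (-T ω) + c)) P :=
    fun x => key_int x (fun ω => -T ω) hTmeas.neg (fun ω => by simpa using hTbdd ω)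
  -- monotonicity
  have hmono : Monotone (fun x => ∫ ω, φ (x + h*b x + s*σ x * T ω + c) ∂P) := by
    intro x y hxy
    refine integral_mono (intp x) (intp y) fun ω => ?_
    apply hφmono
    have hd : (0:ℝ) ≤ y - x := sub_nonneg.2 hxy
    have hb1 : b x - b y ≤ Lb * (y - x) := by
      have hx := hbLip x y
      rw [abs_sub_comm x y, abs_of_nonneg hd] at hx
      exact le_trans (le_abs_self _) hx
    have hσ1 : |σ x - σ y| ≤ Lσ * (y - x) := by
      have hx := hσLip x y
      rwa [abs_sub_comm x y, abs_of_nonneg hd] at hx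
    have habs : |s * T ω * (σ x - σ y)| ≤ (y - x)/2 := by
      rw [abs_mul, abs_mul, abs_of_nonneg hs.le]
      have h3 : |T ω| * |σ x - σ y| ≤ cthr * (Lσ * (y - x)) :=
        mul_le_mul (hTbdd ω) hσ1 (abs_nonneg _) hcthr0.le
      calc s * |T ω| * |σ x - σ y| ≤ s * (cthr * (Lσ * (y - x))) := by
            rw [mul_assoc]; exact mul_le_mul_of_nonneg_left h3 hs.le
        _ = (y - x)/2 := by
            rw [hcthr]; field_simp
    have hcross : s * T ω * (σ x - σ y) ≤ (y - x)/2 := le_trans (le_abs_self _) habs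
    have e1 : h * (b x - b y) ≤ h * (Lb * (y - x)) := mul_le_mul_of_nonneg_left hb1 hh0.le
    have e3 : h * (Lb * (y - x)) ≤ (1/2) * (y - x) := by nlinarith
    nlinarith [hcross, e1, e3]
  -- symmetry of the truncated gaussian
  have hmapneg : (Measure.map (fun z : ℝ => -z) (gaussianReal 0 1)) = gaussianReal 0 1 := by
    simpa using gaussianReal_map_const_mul (μ := 0) (v := 1) (-1)
  have hsym : ∀ x : ℝ, ∫ ω, φ (x + h*b x + s*σ x*T ω + c) ∂P
      = ∫ ω, φ (x + h*b x + s*σ x*(-T ω) + c) ∂P := by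
    intro x
    set G : ℝ → ℝ := fun z => φ (x + h*b x + s*σ x*(if |z| ≤ cthr then z else 0) + c) with hG
    have hGmeas : Measurable G :=
      hφmeas.comp ((measurable_const.add (measurable_const.mul
        (Measurable.ite (measurableSet_le measurable_abs measurable_const)
          measurable_id measurable_const))).add measurable_const)
    have h1 : ∫ ω, φ (x + h*b x + s*σ x*T ω + c) ∂P = ∫ z, G z ∂(gaussianReal 0 1) := by
      rw [← hZlaw, integral_map hZmeas.aemeasurable hGmeas.aestronglyMeasurable]
    have hmapZ : Measure.map (fun ω => -(Z ω)) P = gaussianReal 0 1 := by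
      rw [show (fun ω => -(Z ω)) = (fun z : ℝ => -z) ∘ Z from rfl,
        ← Measure.map_map measurable_neg hZmeas, hZlaw, hmapneg]
    have h2 : ∫ ω, φ (x + h*b x + s*σ x*(-T ω) + c) ∂P = ∫ z, G z ∂(gaussianReal 0 1) := by
      have hGn : ∀ ω, φ (x + h*b x + s*σ x*(-T ω) + c) = G (-(Z ω)) := by
        intro ω
        simp only [hG, hT, abs_neg]
        split_ifs with hc1
        all_goals simp
      simp_rw [hGn]
      rw [← hmapZ, integral_map (show Measurable fun ω => -(Z ω) from hZmeas.neg).aemeasurable hGmeas.aestronglyMeasurable]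
    rw [h1, h2]
  -- pointwise pair convexity for arbitrary noise value t
  have hpairconv : ∀ t : ℝ, ConvexOn ℝ Set.univ
      (fun u => φ (u + h*b u + s*σ u*t + c) + φ (u + h*b u + s*σ u*(-t) + c)) := by
    intro t
    have hAconv : ConvexOn ℝ Set.univ (fun u : ℝ => u + h * b u + c) := by
      refine ⟨convex_univ, fun x _ y _ a a' ha ha' hab => ?_⟩
      have hb2 := hbconv.2 (Set.mem_univ x) (Set.mem_univ y) ha ha' hab
      simp only [smul_eq_mul] at hb2 ⊢
      have hc' : a * c + a' * c = c := by rw [← add_mul, hab, one_mul]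
      linarith [mul_le_mul_of_nonneg_left hb2 hh0.le, hc']
    have hSconv : ConvexOn ℝ Set.univ (fun u : ℝ => s * σ u * |t|) := by
      refine ⟨convex_univ, fun x _ y _ a a' ha ha' hab => ?_⟩
      have hσ2 := hσconv.2 (Set.mem_univ x) (Set.mem_univ y) ha ha' hab
      simp only [smul_eq_mul] at hσ2 ⊢
      linarith [mul_le_mul_of_nonneg_left hσ2 (mul_nonneg hs.le (abs_nonneg t))]
    have hS0 : ∀ u, 0 ≤ s * σ u * |t| :=
      fun u => mul_nonneg (mul_nonneg hs.le (hσnonneg u)) (abs_nonneg t)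
    have hpc := pair_convexOn' hφmono hφconv hAconv hSconv hS0
    have hfun : (fun u => φ (u + h*b u + s*σ u*t + c) + φ (u + h*b u + s*σ u*(-t) + c))
        = (fun u => φ ((u + h*b u + c) + s*σ u*|t|) + φ ((u + h*b u + c) - s*σ u*|t|)) := by
      funext u
      rcases abs_cases t with ⟨he, _⟩ | ⟨he, _⟩ <;> rw [he]
      · rw [show u + h*b u + s*σ u*t + c = (u + h*b u + c) + s*σ u*t from by ring,
          show u + h*b u + s*σ u*(-t) + c = (u + h*b u + c) - s*σ u*t from by ring]
      · rw [show u + h*b u + s*σ u*t + c = (u + h*b u + c) - s*σ u*(-t) from by ring,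
          show u + h*b u + s*σ u*(-t) + c = (u + h*b u + c) + s*σ u*(-t) from by ring,
          add_comm]
    rw [hfun]
    exact hpc
  -- convexity of the integral
  have hconv : ConvexOn ℝ Set.univ (fun x => ∫ ω, φ (x + h*b x + s*σ x * T ω + c) ∂P) := by
    refine ⟨convex_univ, fun x _ y _ a a' ha ha' hab => ?_⟩
    simp only [smul_eq_mul]
    set m := a * x + a' * y with hm
    have hpair : ∀ ω, φ (m + h*b m + s*σ m*T ω + c) + φ (m + h*b m + s*σ m*(-T ω) + c)
        ≤ a * (φ (x + h*b x + s*σ x*T ω + c) + φ (x + h*b x + s*σ x*(-T ω) + c))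
          + a' * (φ (y + h*b y + s*σ y*T ω + c) + φ (y + h*b y + s*σ y*(-T ω) + c)) := by
      intro ω
      have hpc := (hpairconv (T ω)).2 (Set.mem_univ x) (Set.mem_univ y) ha ha' hab
      simp only [smul_eq_mul] at hpc
      exact hpc
    have hint_m : Integrable (fun ω => φ (m + h*b m + s*σ m*T ω + c)
        + φ (m + h*b m + s*σ m*(-T ω) + c)) P := (intp m).add (intm m)
    have hint_rhs : Integrable (fun ω =>
        a * (φ (x + h*b x + s*σ x*T ω + c) + φ (x + h*b x + s*σ x*(-T ω) + c))
        + a' * (φ (y + h*b y + s*σ y*T ω + c) + φ (y + h*b y + s*σ y*(-T ω) + c))) P :=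
      (((intp x).add (intm x)).const_mul a).add (((intp y).add (intm y)).const_mul a')
    have hIm := integral_mono hint_m hint_rhs hpair
    have hRx : Integrable (fun ω => a * (φ (x + h*b x + s*σ x*T ω + c)
        + φ (x + h*b x + s*σ x*(-T ω) + c))) P := ((intp x).add (intm x)).const_mul a
    have hRy : Integrable (fun ω => a' * (φ (y + h*b y + s*σ y*T ω + c)
        + φ (y + h*b y + s*σ y*(-T ω) + c))) P := ((intp y).add (intm y)).const_mul a'
    rw [integral_add (intp m) (intm m), integral_add hRx hRy, integral_const_mul a _,
      integral_const_mul a' _, integral_add (intp x) (intm x),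
      integral_add (intp y) (intm y)] at hIm
    rw [← hsym x, ← hsym y, ← hsym m] at hIm
    linarith
  constructor
  · have := hconv
    simp only [hT] at this
    exact this
  · have := hmono
    simp only [hT] at this
    exact this
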